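/- arXiv:1302.4921 — 3 statements merged into one kernel-verified Lean document; each statement's English description precedes it below -/
import Mathlib

section
/- Define Bernoulli polynomials of the second kind b_l(x) by t(1+t)^x / log(1+t) = ∑_{l≥0} b_l(x) t^l/l! in ℚ[x][[t]], and Bernoulli polynomials of order a by (t/(e^t-1))^a e^{xt} = ∑ B_n^{(a)}(x) t^n/n!. Then for every n ≥ 1, 0 ≤ l ≤ n-1, and any c, ∑_{l₁+⋯+lₙ = l} multinomial(l; l₁,…,lₙ) · b_{l₁}(c)⋯b_{lₙ}(c) = B_l^{(l-n+1)}(cn+1). -/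
open PowerSeries Nat

noncomputable section

/-- The exponential series `e^t ∈ ℚ[[t]]`. -/
def expS : PowerSeries ℚ := PowerSeries.exp ℚ

/-- `log(1+t) = ∑_{k≥1} (-1)^{k+1} t^k / k`. -/
def logS : PowerSeries ℚ := PowerSeries.mk fun k => if k = 0 then 0 else (-1 : ℚ)^(k+1) / k

/-- `log(1+t)/t = ∑_{k≥0} (-1)^k t^k/(k+1)`. -/
def LtS : PowerSeries ℚ := PowerSeries.mk fun k => (-1 : ℚ)^k / (k+1)

/-- `(e^{bt} - 1)/t`. -/
def ebt (b : ℚ) : PowerSeries ℚ := PowerSeries.mk fun m => b^(m+1) / (m+1)!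

/-- Falling factorial `(x)_m = x(x-1)⋯(x-m+1)`. -/
def ff (x : ℚ) (m : ℕ) : ℚ := ∏ i ∈ Finset.range m, (x - i)

/-- `(1+t)^x = ∑_m (x)_m t^m/m!`. -/
def onePlusPow (x : ℚ) : PowerSeries ℚ := PowerSeries.mk fun m => ff x m / m !

/-- Integer powers of a power series (negative powers via `PowerSeries.inv`). -/
def zp (f : PowerSeries ℚ) : ℤ → PowerSeries ℚ
  | Int.ofNat n => f ^ n
  | Int.negSucc n => f⁻¹ ^ (n + 1)

/-- Stirling numbers of the second kind. -/
def S2 : ℕ → ℕ → ℕ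
  | 0, 0 => 1
  | 0, _ + 1 => 0
  | _ + 1, 0 => 0
  | n + 1, k + 1 => (k + 1) * S2 n (k + 1) + S2 n k

/-- Signed Stirling numbers of the first kind: `(x)_n = ∑_l S1 n l • x^l`. -/
def S1 : ℕ → ℕ → ℤ
  | 0, 0 => 1
  | 0, _ + 1 => 0
  | _ + 1, 0 => 0
  | n + 1, k + 1 => S1 n k - n * S1 n (k + 1)

/-- Bernoulli polynomial of (integer) order `a` evaluated at `x`:
`(t/(e^t-1))^a e^{xt} = ∑_m Bpol a x m • t^m/m!`. -/
def Bpol (a : ℤ) (x : ℚ) (m : ℕ) : ℚ :=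
  m ! * PowerSeries.coeff m (zp (ebt 1)⁻¹ a * PowerSeries.rescale x expS)

/-- Bernoulli numbers of order `a`. -/
def Bnum (a : ℤ) (m : ℕ) : ℚ := Bpol a 0 m

/-- Narumi numbers: `(log(1+t)/t)^n = ∑_l Nnum n l • t^l/l!`. -/
def Nnum (n l : ℕ) : ℚ := l ! * PowerSeries.coeff l (LtS ^ n)

/-- Narumi polynomials of (integer) order `a`:
`(log(1+t)/t)^a (1+t)^x = ∑_l Npol a x l • t^l/l!`. -/
def Npol (a : ℤ) (x : ℚ) (l : ℕ) : ℚ :=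
  l ! * PowerSeries.coeff l (zp LtS a * onePlusPow x)

/-- Bernoulli polynomials of the second kind:
`t(1+t)^x/log(1+t) = ∑_m b2 x m • t^m/m!`. -/
def b2 (x : ℚ) (m : ℕ) : ℚ := m ! * PowerSeries.coeff m (onePlusPow x * LtS⁻¹)

/-- Poisson–Charlier polynomial `C_n(x;a)`. -/
def PC (n : ℕ) (x a : ℚ) : ℚ :=
  ∑ k ∈ Finset.range (n + 1), (n.choose k : ℚ) * (-1)^(n - k) * (a⁻¹)^k * ff x k

/-- Generalized binomial coefficient `C(x, m) = (x)_m/m!`. -/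
def gchoose (x : ℚ) (m : ℕ) : ℚ := ff x m / m !

/-- Action of a power series `f(t) = ∑ a_k t^k/k!` on a polynomial:
`f(t) p(x) = ∑_k a_k p^{(k)}(x)/k!` (a finite sum). -/
def act (f : PowerSeries ℚ) (p : Polynomial ℚ) : Polynomial ℚ :=
  ∑ k ∈ Finset.range (p.natDegree + 1),
    PowerSeries.coeff k f • (⇑Polynomial.derivative)^[k] p

/-- `e^{xt} ∈ (ℚ[x])[[t]]`. -/
def expPoly : PowerSeries (Polynomial ℚ) :=
  PowerSeries.mk fun k => ((k ! : ℚ)⁻¹) • Polynomial.X ^ k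

/-- The Sheffer polynomial sequence attached to an invertible series `f`:
`f(t) e^{xt} = ∑_n (polyOf f n) t^n/n!`. -/
def polyOf (f : PowerSeries ℚ) (n : ℕ) : Polynomial ℚ :=
  (n ! : ℚ) • PowerSeries.coeff n (PowerSeries.map Polynomial.C f * expPoly)

/-- `((1-λ)/(e^t-λ))^α`. -/
def FEser (lam : ℚ) (α : ℕ) : PowerSeries ℚ :=
  (PowerSeries.C (1 - lam) * (expS - PowerSeries.C lam)⁻¹) ^ α

/-- Frobenius–Euler polynomials of order `α`. -/
def FE (lam : ℚ) (α n : ℕ) : Polynomial ℚ := polyOf (FEser lam α) n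

/-- `(2/(e^t+1))^α`. -/
def Eser (α : ℕ) : PowerSeries ℚ := (PowerSeries.C (2 : ℚ) * (expS + 1)⁻¹) ^ α

/-- Euler polynomials of order `α`. -/
def Epol (α n : ℕ) : Polynomial ℚ := polyOf (Eser α) n

/-- `((1-λ)/(e^{(λ-1)t}-λ))^α`. -/
def Aser (lam : ℚ) (α : ℕ) : PowerSeries ℚ :=
  (PowerSeries.C (1 - lam) *
    (PowerSeries.rescale (lam - 1) expS - PowerSeries.C lam)⁻¹) ^ α

/-- Frobenius-type Eulerian polynomials of order `α`. -/
def Apol (lam : ℚ) (α n : ℕ) : Polynomial ℚ := polyOf (Aser lam α) n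

end

noncomputable section Aux
open Finset

local notation "ψ" => ebt 1
def φs : PowerSeries ℚ := expS - 1
def SubE (F : PowerSeries ℚ) : PowerSeries ℚ :=
  PowerSeries.mk fun m => ∑ k ∈ range (m+1), coeff k F * coeff m (φs^k)

lemma coeff_expS (m : ℕ) : coeff m expS = 1/m ! := by
  simp [expS, coeff_exp, Algebra.algebraMap_self]

lemma coeff_ψ (m : ℕ) : coeff m ψ = 1/(m+1)! := by
  simp [ebt, coeff_mk]

lemma constantCoeff_ψ : constantCoeff ψ = 1 := by
  rw [← coeff_zero_eq_constantCoeff_apply, coeff_ψ]; norm_num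

lemma φs_eq : φs = X * ψ := by
  ext m
  cases m with
  | zero => simp [φs, coeff_zero_X_mul, expS, constantCoeff_exp]
  | succ m =>
    rw [φs, map_sub, coeff_succ_X_mul, coeff_expS, coeff_ψ]
    simp

lemma constantCoeff_φs : constantCoeff φs = 0 := by
  rw [φs_eq]; simp

lemma coeff_φs_pow_eq_zero {k m : ℕ} (h : m < k) : coeff m (φs^k) = 0 := by
  have hdvd : (X : PowerSeries ℚ)^k ∣ φs^k := by
    rw [φs_eq, mul_pow]; exact Dvd.intro _ rfl
  exact PowerSeries.X_pow_dvd_iff.mp hdvd m h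

lemma coeff_SubE (F : PowerSeries ℚ) (m : ℕ) :
    coeff m (SubE F) = ∑ k ∈ range (m+1), coeff k F * coeff m (φs^k) := by
  rw [SubE, coeff_mk]

lemma coeff_SubE_big (F : PowerSeries ℚ) {m N : ℕ} (h : m < N) :
    coeff m (SubE F) = ∑ k ∈ range N, coeff k F * coeff m (φs^k) := by
  rw [coeff_SubE]
  apply Finset.sum_subset (Finset.range_subset_range.2 h)
  intro k _ hk
  rw [coeff_φs_pow_eq_zero (by simpa using hk), mul_zero]

lemma coeff_aeval (P : Polynomial ℚ) (m : ℕ) :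
    coeff m (Polynomial.aeval φs P) = ∑ k ∈ range (m+1), P.coeff k * coeff m (φs^k) := by
  rw [Polynomial.aeval_eq_sum_range, map_sum]
  simp_rw [LinearMap.map_smul, smul_eq_mul]
  rcases le_total (P.natDegree + 1) (m+1) with h | h
  · apply Finset.sum_subset (Finset.range_subset_range.2 h)
    intro k _ hk
    rw [Polynomial.coeff_eq_zero_of_natDegree_lt (by simpa using hk), zero_mul]
  · symm
    apply Finset.sum_subset (Finset.range_subset_range.2 h)
    intro k _ hk
    rw [coeff_φs_pow_eq_zero (by simpa using hk), mul_zero]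

lemma coeff_SubE_aeval (F : PowerSeries ℚ) {m N : ℕ} (h : m < N) :
    coeff m (SubE F) = coeff m (Polynomial.aeval φs (trunc N F)) := by
  rw [coeff_aeval, coeff_SubE]
  apply Finset.sum_congr rfl
  intro k hk
  rw [coeff_trunc, if_pos (lt_of_lt_of_le (Finset.mem_range.1 hk) h)]

lemma SubE_mul (F G : PowerSeries ℚ) : SubE (F * G) = SubE F * SubE G := by
  ext m
  rw [PowerSeries.coeff_mul]
  have h1 : ∀ p ∈ antidiagonal m,
      coeff p.1 (SubE F) * coeff p.2 (SubE G) =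
      coeff p.1 (Polynomial.aeval φs (trunc (m+1) F)) *
        coeff p.2 (Polynomial.aeval φs (trunc (m+1) G)) := by
    intro p hp
    have := Finset.HasAntidiagonal.mem_antidiagonal.1 hp
    rw [coeff_SubE_aeval F (N := m+1) (by omega), coeff_SubE_aeval G (N := m+1) (by omega)]
  rw [Finset.sum_congr rfl h1, ← PowerSeries.coeff_mul, ← map_mul,
    coeff_SubE_aeval (F*G) (Nat.lt_succ_self m), coeff_aeval, coeff_aeval]
  apply Finset.sum_congr rfl
  intro k hk
  have hk' : k < m + 1 := Finset.mem_range.1 hk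
  congr 1
  have h2 := PowerSeries.trunc_trunc_mul_trunc (n := m+1) F G
  have h3 := congrArg (fun Q => Polynomial.coeff Q k) h2
  simp only [PowerSeries.coeff_trunc, if_pos hk'] at h3
  rw [PowerSeries.coeff_trunc, if_pos hk', ← h3, ← Polynomial.coe_mul, Polynomial.coeff_coe]

lemma SubE_one : SubE 1 = 1 := by
  ext m
  rw [coeff_SubE, Finset.sum_eq_single 0]
  · simp
  · intro k _ hk
    rw [PowerSeries.coeff_one, if_neg hk, zero_mul]
  · intro h
    simp at h

lemma SubE_pow (F : PowerSeries ℚ) (n : ℕ) : SubE (F^n) = (SubE F)^n := by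
  induction n with
  | zero => simpa using SubE_one
  | succ n ih => rw [pow_succ, pow_succ, SubE_mul, ih]

lemma SubE_X : SubE X = φs := by
  ext m
  rw [coeff_SubE, Finset.sum_eq_single 1]
  · simp
  · intro k _ hk
    rw [PowerSeries.coeff_X, if_neg hk, zero_mul]
  · intro h
    rw [Finset.mem_range] at h
    have : m = 0 := by omega
    subst this
    rw [pow_one, coeff_zero_eq_constantCoeff_apply, constantCoeff_φs, mul_zero]
local notation "D" => PowerSeries.derivative ℚ

lemma derivative_expS : D expS = expS := by
  ext m
  rw [PowerSeries.coeff_derivative, coeff_expS, coeff_expS]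
  rw [factorial_succ]
  push_cast
  field_simp

lemma derivative_φs : D φs = expS := by
  rw [φs, map_sub, derivative_expS]
  simp

lemma φs_pow_rec (k m : ℕ) :
    coeff (m+1) (φs^(k+1)) * (m+1) = (k+1) * (coeff m (φs^(k+1)) + coeff m (φs^k)) := by
  have hD : D (φs^(k+1)) = (k+1) • (φs^(k+1) + φs^k) := by
    rw [Derivation.leibniz_pow, derivative_φs]
    have : expS = φs + 1 := by rw [φs]; ring
    rw [this]
    simp only [Nat.add_sub_cancel, smul_eq_mul]
    ring_nf
  have h2 := congrArg (coeff m) hD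
  rw [PowerSeries.coeff_derivative] at h2
  rw [h2, map_nsmul, map_add]
  push_cast
  ring

lemma hS2cast : ∀ m k, (m ! : ℚ) * coeff m (φs^k) = k ! * S2 m k := by
  intro m
  induction m with
  | zero =>
    intro k
    cases k with
    | zero => simp [S2]
    | succ k =>
      rw [coeff_zero_eq_constantCoeff_apply, map_pow, constantCoeff_φs]
      simp [S2]
  | succ m ih =>
    intro k
    cases k with
    | zero =>
      simp [S2, PowerSeries.coeff_one]
    | succ k =>
      have hrec := φs_pow_rec k m
      have h1 := ih (k+1)
      have h2 := ih k
      have hS : (S2 (m+1) (k+1) : ℚ) = (k+1) * S2 m (k+1) + S2 m k := by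
        rw [show S2 (m+1) (k+1) = (k+1) * S2 m (k+1) + S2 m k from rfl]
        push_cast; ring
      have hm : ((m+1)! : ℚ) = (m+1) * m ! := by rw [factorial_succ]; push_cast; ring
      have hk : ((k+1)! : ℚ) = (k+1) * k ! := by rw [factorial_succ]; push_cast; ring
      rw [hm, hS]
      linear_combination (↑(m !) : ℚ) * hrec + ((k:ℚ)+1) * h1 + ((k:ℚ)+1) * h2
        - (S2 m k : ℚ) * hk

lemma coeff_φs_pow (m k : ℕ) : coeff m (φs^k) = k ! * S2 m k / m ! := by
  have := hS2cast m k
  have hm : (m ! : ℚ) ≠ 0 := by positivity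
  field_simp
  linarith [this]
lemma S2_zero_of_lt : ∀ m k, m < k → S2 m k = 0 := by
  intro m
  induction m with
  | zero => intro k hk; match k, hk with | k+1, _ => rfl
  | succ m ih =>
    intro k hk
    match k, hk with
    | k+1, hk =>
      show (k+1) * S2 m (k+1) + S2 m k = 0
      rw [ih (k+1) (by omega), ih k (by omega)]
      simp

lemma ff_succ (c : ℚ) (k : ℕ) : ff c (k+1) = ff c k * (c - k) := Finset.prod_range_succ _ _

lemma hSid (c : ℚ) : ∀ m, ∑ k ∈ range (m+1), (S2 m k : ℚ) * ff c k = c^m := by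
  intro m
  induction m with
  | zero => simp [S2, ff]
  | succ m ih =>
    rw [Finset.sum_range_succ' _ (m+1)]
    have h0 : ((S2 (m+1) 0 : ℚ)) * ff c 0 = 0 := by
      rw [show S2 (m+1) 0 = 0 from rfl]; simp
    rw [h0, add_zero]
    have hterm : ∀ k, (S2 (m+1) (k+1) : ℚ) * ff c (k+1)
        = (k+1) * S2 m (k+1) * ff c (k+1) + S2 m k * ff c (k+1) := by
      intro k
      rw [show S2 (m+1) (k+1) = (k+1) * S2 m (k+1) + S2 m k from rfl]
      push_cast; ring
    rw [Finset.sum_congr rfl (fun k _ => hterm k), Finset.sum_add_distrib]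
    -- second sum: ∑_{k∈range(m+1)} S2 m k * ff c (k+1) ; ff c (k+1) = ff c k * (c - k)
    -- first sum: ∑_{k∈range(m+1)} (k+1) S2 m (k+1) ff c (k+1) = ∑_{k∈range(m+1)} k S2 m k ff c k
    have hfirst : ∑ k ∈ range (m+1), ((k:ℚ)+1) * S2 m (k+1) * ff c (k+1)
        = ∑ k ∈ range (m+1), (k:ℚ) * S2 m k * ff c k := by
      rw [Finset.sum_range_succ, S2_zero_of_lt m (m+1) (by omega)]
      rw [Finset.sum_range_succ' (fun k => (k:ℚ) * S2 m k * ff c k) m]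
      push_cast
      simp
    rw [hfirst]
    have : ∀ k, (S2 m k : ℚ) * ff c (k+1) = S2 m k * ff c k * c - k * S2 m k * ff c k := by
      intro k; rw [ff_succ]; ring
    rw [Finset.sum_congr rfl (fun k _ => this k), Finset.sum_sub_distrib]
    rw [← Finset.sum_mul, ih]
    rw [pow_succ]
    ring
lemma SubE_onePlusPow (c : ℚ) : SubE (onePlusPow c) = PowerSeries.rescale c expS := by
  ext m
  rw [coeff_SubE, PowerSeries.coeff_rescale, coeff_expS]
  have hterm : ∀ k, coeff k (onePlusPow c) * coeff m (φs^k)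
      = (S2 m k : ℚ) * ff c k / m ! := by
    intro k
    rw [onePlusPow, coeff_mk, coeff_φs_pow]
    have h1 : (k ! : ℚ) ≠ 0 := by positivity
    field_simp
  rw [Finset.sum_congr rfl (fun k _ => hterm k), ← Finset.sum_div, hSid c m]
  ring

lemma logS_eq : logS = X * LtS := by
  ext m
  cases m with
  | zero => simp [logS, coeff_mk, coeff_zero_X_mul]
  | succ m =>
    rw [logS, coeff_mk, coeff_succ_X_mul, LtS, coeff_mk]
    simp only [Nat.succ_ne_zero, if_false]
    rw [pow_succ, pow_succ]
    push_cast
    ring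

lemma hAid : ∀ m, ∑ j ∈ range m, ((-1:ℚ))^j * j ! * S2 m (j+1) = if m = 1 then 1 else 0 := by
  intro m
  match m with
  | 0 => simp
  | 1 => norm_num [show S2 1 1 = 1 from rfl]
  | (t+2) =>
    rw [if_neg (by omega)]
    have hterm : ∀ j, ((-1:ℚ))^j * j ! * S2 (t+2) (j+1)
        = (-1:ℚ)^j * (j+1)! * S2 (t+1) (j+1) + (-1:ℚ)^j * j ! * S2 (t+1) j := by
      intro j
      rw [show S2 (t+2) (j+1) = (j+1) * S2 (t+1) (j+1) + S2 (t+1) j from rfl,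
        factorial_succ]
      push_cast
      ring
    rw [Finset.sum_congr rfl (fun j _ => hterm j), Finset.sum_add_distrib]
    have hfirst : ∑ j ∈ range (t+2), (-1:ℚ)^j * (j+1)! * S2 (t+1) (j+1)
        = ∑ j ∈ range (t+1), (-1:ℚ)^j * (j+1)! * S2 (t+1) (j+1) := by
      rw [Finset.sum_range_succ, S2_zero_of_lt (t+1) (t+2) (by omega)]
      simp
    have hsecond : ∑ j ∈ range (t+2), (-1:ℚ)^j * j ! * S2 (t+1) j
        = ∑ j ∈ range (t+1), (-1:ℚ)^(j+1) * (j+1)! * S2 (t+1) (j+1) := by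
      rw [Finset.sum_range_succ' (fun j => (-1:ℚ)^j * j ! * S2 (t+1) j) (t+1)]
      rw [show S2 (t+1) 0 = 0 from rfl]
      simp
    rw [hfirst, hsecond, ← Finset.sum_add_distrib]
    apply Finset.sum_eq_zero
    intro j _
    rw [pow_succ]
    ring

lemma SubE_logS : SubE logS = X := by
  ext m
  rw [coeff_SubE, Finset.sum_range_succ' _ m]
  have h0 : coeff 0 logS * coeff m (φs^0) = 0 := by
    rw [logS, coeff_mk]; simp
  rw [h0, add_zero]
  have hterm : ∀ j, coeff (j+1) logS * coeff m (φs^(j+1))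
      = ((-1:ℚ)^j * j ! * S2 m (j+1)) / m ! := by
    intro j
    rw [logS, coeff_mk, coeff_φs_pow]
    simp only [Nat.succ_ne_zero, if_false]
    rw [factorial_succ, pow_succ, pow_succ]
    have : ((j:ℚ)+1) ≠ 0 := by positivity
    push_cast
    field_simp
  rw [Finset.sum_congr rfl (fun j _ => hterm j), ← Finset.sum_div, hAid m]
  rw [PowerSeries.coeff_X]
  by_cases hm : m = 1
  · subst hm; norm_num
  · simp [hm]
lemma constantCoeff_LtS : constantCoeff LtS = 1 := by
  rw [← coeff_zero_eq_constantCoeff_apply, LtS, coeff_mk]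
  norm_num

lemma ψ_mul_SubE_LtS : ψ * SubE LtS = 1 := by
  have h : X * (ψ * SubE LtS) = X * 1 := by
    rw [← mul_assoc, ← φs_eq, ← SubE_X, ← SubE_mul, ← logS_eq, SubE_logS, mul_one]
  exact mul_left_cancel₀ PowerSeries.X_ne_zero h

lemma SubE_LtS_inv : SubE (LtS⁻¹) = ψ := by
  have h1 : SubE LtS * SubE LtS⁻¹ = 1 := by
    rw [← SubE_mul, PowerSeries.mul_inv_cancel _ (by rw [constantCoeff_LtS]; norm_num), SubE_one]
  calc SubE LtS⁻¹ = (ψ * SubE LtS) * SubE LtS⁻¹ := by rw [ψ_mul_SubE_LtS, one_mul]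
    _ = ψ * (SubE LtS * SubE LtS⁻¹) := by ring
    _ = ψ := by rw [h1, mul_one]

lemma ψ_mul_inv : ψ * (ebt 1)⁻¹ = 1 :=
  PowerSeries.mul_inv_cancel _ (by rw [constantCoeff_ψ]; norm_num)

lemma ψ_inv_mul : (ebt 1)⁻¹ * ψ = 1 := by rw [mul_comm]; exact ψ_mul_inv

lemma constantCoeff_ψinv : constantCoeff ((ebt 1)⁻¹) = 1 := by
  rw [PowerSeries.constantCoeff_inv, constantCoeff_ψ]; norm_num


lemma Dψinv : D ((ebt 1)⁻¹) = -((ebt 1)⁻¹ * ((ebt 1)⁻¹ * D ψ)) := by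
  have h0 : D (ψ * (ebt 1)⁻¹) = 0 := by rw [ψ_mul_inv]; exact Derivation.map_one_eq_zero _
  rw [Derivation.leibniz] at h0
  simp only [smul_eq_mul] at h0
  have h1 : ψ * D ((ebt 1)⁻¹) = -((ebt 1)⁻¹ * D ψ) :=
    eq_neg_of_add_eq_zero_left h0
  have h2 := congrArg (fun z => (ebt 1)⁻¹ * z) h1
  simp only [← mul_assoc, ψ_inv_mul, one_mul] at h2
  rw [h2]
  ring

lemma expS_eq_ψ_add : expS = ψ + X * D ψ := by
  ext m
  cases m with
  | zero =>
    rw [map_add, coeff_zero_X_mul, coeff_expS, coeff_ψ]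
    norm_num
  | succ m =>
    rw [map_add, coeff_succ_X_mul, coeff_expS, coeff_ψ, PowerSeries.coeff_derivative, coeff_ψ]
    rw [factorial_succ (m+1), factorial_succ m]
    push_cast
    have h1 : ((m:ℚ)+1) ≠ 0 := by positivity
    have h2 : ((m:ℚ)+1+1) ≠ 0 := by positivity
    have h3 : ((m !:ℚ)) ≠ 0 := by positivity
    field_simp
    ring
lemma hzero (i : ℕ) : coeff (i+1) (expS * ((ebt 1)⁻¹)^(i+2)) = 0 := by
  have hψpow : ψ * ((ebt 1)⁻¹)^(i+2) = ((ebt 1)⁻¹)^(i+1) := by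
    calc ψ * ((ebt 1)⁻¹)^(i+2) = ((ebt 1)⁻¹)^(i+1) * ((ebt 1)⁻¹ * ψ) := by
          rw [pow_succ]; ring
      _ = ((ebt 1)⁻¹)^(i+1) := by rw [ψ_inv_mul, mul_one]
  have hDpow : D (((ebt 1)⁻¹)^(i+1)) = -((i+1 : ℕ) • (((ebt 1)⁻¹)^(i+2) * D ψ)) := by
    rw [Derivation.leibniz_pow, Dψinv, Nat.add_sub_cancel, smul_eq_mul, ← smul_neg]
    congr 1
    ring
  have hc : coeff i (D ψ * ((ebt 1)⁻¹)^(i+2)) = -(coeff (i+1) (((ebt 1)⁻¹)^(i+1))) := by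
    have h5 := congrArg (coeff i) hDpow
    rw [PowerSeries.coeff_derivative, map_neg, map_nsmul, nsmul_eq_mul] at h5
    push_cast at h5
    have hne : ((i:ℚ)+1) ≠ 0 := by positivity
    rw [mul_comm (D ψ)]
    have h6 : ((i:ℚ)+1) * coeff i (((ebt 1)⁻¹)^(i+2) * D ψ)
        = ((i:ℚ)+1) * (-(coeff (i+1) (((ebt 1)⁻¹)^(i+1)))) := by linarith [h5]
    exact mul_left_cancel₀ hne h6
  rw [expS_eq_ψ_add, add_mul, map_add, hψpow, mul_assoc, coeff_succ_X_mul, hc]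
  ring

lemma hCoV (F : PowerSeries ℚ) (l : ℕ) :
    coeff l (SubE F * (expS * ((ebt 1)⁻¹)^(l+1))) = coeff l F := by
  set G := expS * ((ebt 1)⁻¹)^(l+1) with hG
  rw [PowerSeries.coeff_mul]
  have h1 : ∀ p ∈ antidiagonal l, coeff p.1 (SubE F) * coeff p.2 G
      = ∑ k ∈ range (l+1), coeff k F * (coeff p.1 (φs^k) * coeff p.2 G) := by
    intro p hp
    have hple := Finset.HasAntidiagonal.mem_antidiagonal.1 hp
    rw [coeff_SubE_big F (show p.1 < l+1 by omega), Finset.sum_mul]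
    exact Finset.sum_congr rfl fun k _ => by ring
  rw [Finset.sum_congr rfl h1, Finset.sum_comm]
  have h2 : ∀ k, ∑ p ∈ antidiagonal l, coeff k F * (coeff p.1 (φs^k) * coeff p.2 G)
      = coeff k F * coeff l (φs^k * G) := by
    intro k
    rw [← Finset.mul_sum, PowerSeries.coeff_mul]
  rw [Finset.sum_congr rfl fun k _ => h2 k]
  have h3 : ∀ k ∈ range (l+1),
      coeff k F * coeff l (φs^k * G) = if k = l then coeff k F else 0 := by
    intro k hk
    have hkl : k ≤ l := by simpa [Nat.lt_succ_iff] using hk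
    have hsplit : φs^k * G = X^k * (expS * ((ebt 1)⁻¹)^((l-k)+1)) := by
      rw [φs_eq, mul_pow, hG]
      have hpow : ψ^k * (expS * ((ebt 1)⁻¹)^(l+1)) = expS * ((ebt 1)⁻¹)^((l-k)+1) := by
        rw [show l+1 = k + ((l-k)+1) by omega, pow_add]
        calc ψ^k * (expS * (((ebt 1)⁻¹)^k * ((ebt 1)⁻¹)^((l-k)+1)))
            = (ψ * (ebt 1)⁻¹)^k * (expS * ((ebt 1)⁻¹)^((l-k)+1)) := by rw [mul_pow]; ring
          _ = expS * ((ebt 1)⁻¹)^((l-k)+1) := by rw [ψ_mul_inv, one_pow, one_mul]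
      rw [mul_assoc, hpow]
    rw [hsplit]
    have hXpow := PowerSeries.coeff_X_pow_mul (expS * ((ebt 1)⁻¹)^((l-k)+1)) k (l-k)
    rw [show l - k + k = l by omega] at hXpow
    rw [hXpow]
    rcases eq_or_lt_of_le hkl with he | hlt
    · subst he
      rw [if_pos rfl, Nat.sub_self, pow_one, coeff_zero_eq_constantCoeff_apply, map_mul,
        constantCoeff_ψinv]
      rw [show constantCoeff expS = 1 from by rw [expS]; exact PowerSeries.constantCoeff_exp]
      ring
    · rw [if_neg (by omega)]
      obtain ⟨i, hi⟩ : ∃ i, l - k = i + 1 := ⟨l - k - 1, by omega⟩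
      rw [hi, show i + 1 + 1 = i + 2 from rfl, hzero i, mul_zero]
  rw [Finset.sum_congr rfl h3, Finset.sum_ite_eq' (range (l+1)) l (fun k => coeff k F)]
  rw [if_pos (Finset.self_mem_range_succ l)]

lemma coeff_pow_tuple (F : PowerSeries ℚ) (n l : ℕ) :
    coeff l (F^n) = ∑ f ∈ Finset.Nat.antidiagonalTuple n l, ∏ i, coeff (f i) F := by
  have h1 : F^n = ∏ _i : Fin n, F := by simp [Finset.prod_const, Finset.card_univ]
  rw [h1, PowerSeries.coeff_prod]
  refine Finset.sum_nbij' (fun g => (g : Fin n → ℕ))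
    (fun f => Finsupp.equivFunOnFinite.symm f) ?_ ?_ ?_ ?_ ?_
  · intro g hg
    rw [Finset.mem_finsuppAntidiag] at hg
    rw [Finset.Nat.mem_antidiagonalTuple]
    exact hg.1
  · intro f hf
    rw [Finset.Nat.mem_antidiagonalTuple] at hf
    rw [Finset.mem_finsuppAntidiag]
    constructor
    · rw [← hf]
      apply Finset.sum_congr rfl
      intro i _
      simp
    · exact Finset.subset_univ _
  · intro g _
    exact Finsupp.equivFunOnFinite_symm_coe g
  · intro f _
    funext i
    simp
  · intro g _
    rfl

lemma rescale_exp_pow (c : ℚ) (n : ℕ) :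
    (PowerSeries.rescale c expS)^n = PowerSeries.rescale (c*n) expS := by
  induction n with
  | zero =>
    rw [pow_zero, Nat.cast_zero, mul_zero, PowerSeries.rescale_zero]
    simp [expS, PowerSeries.constantCoeff_exp]
  | succ n ih =>
    rw [pow_succ, ih, expS, PowerSeries.exp_mul_exp_eq_exp_add]
    congr 1
    push_cast
    ring

lemma inv_inv_ψ : ((ebt 1)⁻¹)⁻¹ = ebt 1 :=
  ((PowerSeries.eq_inv_iff_mul_eq_one
    (by rw [constantCoeff_ψinv]; norm_num)).mpr ψ_mul_inv).symm

lemma zp_eq (l n : ℕ) (h : l < n) : zp ((ebt 1)⁻¹) ((l:ℤ) - n + 1) = (ebt 1)^(n-1-l) := by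
  have hd : (l:ℤ) - n + 1 = -((n-1-l : ℕ) : ℤ) := by push_cast; omega
  rw [hd]
  rcases hdd : n - 1 - l with _ | e
  · simp only [Nat.cast_zero, neg_zero]
    rw [show (0:ℤ) = Int.ofNat 0 from rfl,
      show zp ((ebt 1)⁻¹) (Int.ofNat 0) = ((ebt 1)⁻¹)^0 from rfl, pow_zero, pow_zero]
  · rw [show -(((e+1:ℕ)) : ℤ) = Int.negSucc e by rw [Int.negSucc_eq]; push_cast; ring,
      show zp ((ebt 1)⁻¹) (Int.negSucc e) = (((ebt 1)⁻¹)⁻¹)^(e+1) from rfl, inv_inv_ψ]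


end Aux

theorem stmt7 (n : ℕ) (hn : 1 ≤ n) (l : ℕ) (hl : l < n) (c : ℚ) :
    ∑ f ∈ Finset.Nat.antidiagonalTuple n l,
        (Nat.multinomial Finset.univ f : ℚ) * ∏ i, b2 c (f i) =
      Bpol ((l : ℤ) - n + 1) (c * n + 1) l := by
  set G := onePlusPow c * LtS⁻¹ with hGdef
  have hG : ∀ m : ℕ, b2 c m = m ! * coeff m G := fun m => rfl
  have hL : ∑ f ∈ Finset.Nat.antidiagonalTuple n l,
      (Nat.multinomial Finset.univ f : ℚ) * ∏ i, b2 c (f i)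
      = (l ! : ℚ) * coeff l (G^n) := by
    rw [coeff_pow_tuple, Finset.mul_sum]
    apply Finset.sum_congr rfl
    intro f hf
    have hsum : ∑ i, f i = l := Finset.Nat.mem_antidiagonalTuple.1 hf
    have hspec : (∏ i, (f i)!) * Nat.multinomial Finset.univ f = l ! := by
      rw [Nat.multinomial_spec, hsum]
    calc (Nat.multinomial Finset.univ f : ℚ) * ∏ i, b2 c (f i)
        = (Nat.multinomial Finset.univ f : ℚ) * ∏ i, (((f i)! : ℚ) * coeff (f i) G) := by
          rw [Finset.prod_congr rfl fun i _ => hG (f i)]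
      _ = (((∏ i, (f i)!) * Nat.multinomial Finset.univ f : ℕ) : ℚ) * ∏ i, coeff (f i) G := by
          push_cast
          rw [Finset.prod_mul_distrib]
          ring
      _ = (l ! : ℚ) * ∏ i, coeff (f i) G := by rw [hspec]
  rw [hL]
  have hSub : SubE (G^n) = PowerSeries.rescale (c*n) expS * (ebt 1)^n := by
    rw [SubE_pow, hGdef, SubE_mul, SubE_onePlusPow, SubE_LtS_inv, mul_pow, rescale_exp_pow]
  have hkey : coeff l (G^n)
      = coeff l ((ebt 1)^(n-1-l) * PowerSeries.rescale (c*n+1) expS) := by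
    rw [← hCoV (G^n) l, hSub]
    congr 1
    have hsplit : (ebt 1)^n = (ebt 1)^(n-1-l) * (ebt 1)^(l+1) := by
      rw [← pow_add]
      congr 1
      omega
    have hcancel : (ebt 1)^(l+1) * ((ebt 1)⁻¹)^(l+1) = 1 := by
      rw [← mul_pow, ψ_mul_inv, one_pow]
    have hexp : PowerSeries.rescale (c*n) expS * expS = PowerSeries.rescale (c*n+1) expS := by
      have h9 := PowerSeries.exp_mul_exp_eq_exp_add (c*(n:ℚ)) (1:ℚ)
      rw [PowerSeries.rescale_one] at h9
      simpa [expS] using h9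
    calc PowerSeries.rescale (c*n) expS * (ebt 1)^n * (expS * ((ebt 1)⁻¹)^(l+1))
        = ((ebt 1)^(l+1) * ((ebt 1)⁻¹)^(l+1))
            * ((PowerSeries.rescale (c*n) expS * expS) * (ebt 1)^(n-1-l)) := by
          rw [hsplit]; ring
      _ = (ebt 1)^(n-1-l) * PowerSeries.rescale (c*n+1) expS := by
          rw [hcancel, hexp, one_mul, mul_comm]
  rw [hkey]
  rw [Bpol, zp_eq l n hl]
end

section
/- Let λ ≠ 1 and α be a positive integer, and define the Frobenius–Euler polynomials of order α by ((1-λ)/(e^t-λ))^α e^{xt} = ∑_{n≥0} H_n^{(α)}(x|λ) t^n/n!. Let b ≠ 0 and, for n ≥ 1, let Sₙ(x) be the Sheffer polynomial determined by Sₙ(x) = ((1-λ)/(e^t-λ))^α · x · ((e^{bt}-1)/t)^n x^{n-1} (the umbral-calculus formula of Theorem 1 applied to the pair (((e^t-λ)/(1-λ))^α, t²/(e^{bt}-1))). Then Sₙ(x) = ∑_{k=0}^{n-1} (C(n-1,k)/C(k+n,n)) · S₂(k+n,n) · b^{k+n} · H_{n-k}^{(α)}(x|λ). -/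
open PowerSeries Nat

noncomputable section

lemma deriv_expS : d⁄dX ℚ expS = expS := by
  ext m
  rw [PowerSeries.coeff_derivative]
  simp [expS, PowerSeries.coeff_exp, factorial_succ]
  field_simp

lemma coeff_exp_sub_one_pow (m n : ℕ) :
    PowerSeries.coeff (R := ℚ) m ((expS - 1) ^ n) = n ! * S2 m n / m ! := by
  induction m generalizing n with
  | zero =>
    rw [PowerSeries.coeff_zero_eq_constantCoeff, map_pow]
    have : constantCoeff (expS - 1) = 0 := by
      simp [expS, PowerSeries.constantCoeff_exp]
    rw [this]
    cases n <;> simp [S2]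
  | succ m ih =>
    cases n with
    | zero => simp [S2]
    | succ n =>
      have hd : d⁄dX ℚ ((expS - 1) ^ (n + 1)) =
          (n + 1 : ℚ) • ((expS - 1) ^ (n + 1) + (expS - 1) ^ n) := by
        rw [Derivation.leibniz_pow]
        have h1 : d⁄dX ℚ (expS - 1) = expS := by
          rw [map_sub, deriv_expS]; simp
        rw [h1, succ_sub_one,
          show ((n:ℚ)+1) = ((n+1:ℕ):ℚ) by push_cast; ring,
          Nat.cast_smul_eq_nsmul]
        congr 1
        rw [smul_eq_mul]
        ring
      have := congrArg (PowerSeries.coeff m) hd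
      rw [PowerSeries.coeff_derivative] at this
      rw [map_smul, map_add, ih, ih] at this
      have hm : PowerSeries.coeff (m+1) ((expS - 1) ^ (n+1)) =
          ((n:ℚ)+1) * (((n+1)! * S2 m (n+1) / m !) + (n ! * S2 m n / m !)) / ((m:ℚ)+1) := by
        rw [smul_eq_mul] at this
        field_simp at this ⊢
        linarith [this]
      rw [hm]
      show _ = ((n+1)! : ℚ) * (S2 (m+1) (n+1) : ℚ) / ((m+1)! : ℚ)
      rw [show S2 (m+1) (n+1) = (n+1) * S2 m (n+1) + S2 m n from rfl]
      push_cast [factorial_succ]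
      field_simp

lemma X_mul_ebt (b : ℚ) : (X : PowerSeries ℚ) * ebt b = rescale b expS - 1 := by
  ext m
  rw [map_sub, PowerSeries.coeff_rescale]
  cases m with
  | zero => simp [expS, PowerSeries.constantCoeff_exp]
  | succ m =>
    rw [PowerSeries.coeff_succ_X_mul]
    simp [ebt, expS, PowerSeries.coeff_exp]
    rw [div_eq_mul_inv]

lemma coeff_ebt_pow (b : ℚ) (k n : ℕ) :
    PowerSeries.coeff k ((ebt b) ^ n) = b^(k+n) * n ! * S2 (k+n) n / (k+n)! := by
  have h1 : ((X : PowerSeries ℚ) * ebt b) ^ n = X ^ n * (ebt b) ^ n := by ring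
  have h2 := congrArg (PowerSeries.coeff (k + n)) h1
  rw [X_mul_ebt, PowerSeries.coeff_X_pow_mul] at h2
  have h3 : (rescale b expS - 1) ^ n = rescale b ((expS - 1) ^ n) := by
    rw [map_pow, map_sub, map_one]
  rw [h3, PowerSeries.coeff_rescale, coeff_exp_sub_one_pow] at h2
  rw [← h2]; ring

lemma act_eq_of_lt (f : PowerSeries ℚ) (p : Polynomial ℚ) (N : ℕ) (h : p.natDegree < N) :
    act f p = ∑ k ∈ Finset.range N,
      PowerSeries.coeff k f • (⇑Polynomial.derivative)^[k] p := by
  refine Finset.sum_subset (Finset.range_subset_range.mpr h) ?_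
  intro k _ hk
  rw [Finset.mem_range, not_lt] at hk
  rw [Polynomial.iterate_derivative_eq_zero (lt_of_lt_of_le (Nat.lt_succ_self _) hk), smul_zero]

lemma act_X_pow (f : PowerSeries ℚ) (m : ℕ) :
    act f (Polynomial.X ^ m) = ∑ k ∈ Finset.range (m + 1),
      (PowerSeries.coeff k f * (m.descFactorial k)) • Polynomial.X ^ (m - k) := by
  rw [act, Polynomial.natDegree_X_pow]
  refine Finset.sum_congr rfl fun k _ => ?_
  rw [Polynomial.iterate_derivative_X_pow_eq_smul, smul_smul]

lemma polyOf_eq_act (f : PowerSeries ℚ) (m : ℕ) :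
    polyOf f m = act f (Polynomial.X ^ m) := by
  rw [act_X_pow, polyOf, PowerSeries.coeff_mul,
    Finset.Nat.sum_antidiagonal_eq_sum_range_succ_mk, Finset.smul_sum]
  refine Finset.sum_congr rfl fun k hk => ?_
  rw [Finset.mem_range, Nat.lt_succ_iff] at hk
  rw [PowerSeries.coeff_map, expPoly, PowerSeries.coeff_mk]
  rw [mul_smul_comm, ← Polynomial.smul_eq_C_mul, smul_smul, smul_smul]
  congr 1
  have hfac : ((m - k)! : ℚ) * (m.descFactorial k) = m ! := by
    rw [← Nat.cast_mul, Nat.factorial_mul_descFactorial hk]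
  have h0 : ((m - k)! : ℚ) ≠ 0 := by positivity
  field_simp
  rw [← hfac]
  ring

lemma act_sum_smul (f : PowerSeries ℚ) {ι : Type} (s : Finset ι) (c : ι → ℚ) (d : ι → ℕ)
    (N : ℕ) (hN : 0 < N) (h : ∀ i ∈ s, d i < N) :
    act f (∑ i ∈ s, c i • Polynomial.X ^ (d i)) =
      ∑ i ∈ s, c i • act f (Polynomial.X ^ (d i)) := by
  rw [act_eq_of_lt f _ N]
  · simp_rw [Polynomial.iterate_derivative_sum, Polynomial.iterate_derivative_smul,
      Finset.smul_sum]
    rw [Finset.sum_comm]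
    refine Finset.sum_congr rfl fun i hi => ?_
    rw [act_eq_of_lt f _ N (by rw [Polynomial.natDegree_X_pow]; exact h i hi),
      Finset.smul_sum]
    refine Finset.sum_congr rfl fun k _ => ?_
    rw [smul_comm]
  · calc (∑ i ∈ s, c i • Polynomial.X ^ (d i)).natDegree
        ≤ N - 1 := Polynomial.natDegree_sum_le_of_forall_le s _ fun i hi =>
          le_trans (Polynomial.natDegree_smul_le _ _)
            (by rw [Polynomial.natDegree_X_pow]; have := h i hi; omega)
      _ < N := by omega

end

theorem stmt11 (lam : ℚ) (hlam : lam ≠ 1) (α : ℕ) (hα : 0 < α)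
    (b : ℚ) (hb : b ≠ 0) (n : ℕ) (hn : 1 ≤ n) :
    act (FEser lam α) (Polynomial.X * act ((ebt b) ^ n) (Polynomial.X ^ (n - 1))) =
      ∑ k ∈ Finset.range n,
        (((n - 1).choose k : ℚ) / ((k + n).choose n) * S2 (k + n) n * b ^ (k + n)) •
          FE lam α (n - k) := by
  set c : ℕ → ℚ := fun k =>
    PowerSeries.coeff k ((ebt b) ^ n) * ((n-1).descFactorial k) with hc
  have h1 : Polynomial.X * act ((ebt b) ^ n) (Polynomial.X ^ (n - 1)) =
      ∑ k ∈ Finset.range n, c k • Polynomial.X ^ (n - k) := by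
    rw [act_X_pow, show n - 1 + 1 = n by omega, Finset.mul_sum]
    refine Finset.sum_congr rfl fun k hk => ?_
    rw [Finset.mem_range] at hk
    rw [mul_smul_comm]
    congr 1
    rw [show n - k = (n-1-k)+1 by omega, pow_succ]
    ring
  rw [h1, act_sum_smul _ _ _ _ (n+1) (by omega) (fun i _ => by omega)]
  refine Finset.sum_congr rfl fun k hk => ?_
  rw [Finset.mem_range] at hk
  rw [FE, polyOf_eq_act]
  congr 1
  show PowerSeries.coeff k ((ebt b) ^ n) * ((n-1).descFactorial k) = _
  rw [coeff_ebt_pow]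
  have hch : (((k+n).choose n : ℚ)) = ((k+n)! : ℚ) / ((n ! : ℚ) * (k ! : ℚ)) := by
    rw [eq_div_iff (by positivity)]
    rw [← mul_assoc]
    have := Nat.choose_mul_factorial_mul_factorial (Nat.le_add_left n k)
    rw [show k + n - n = k by omega] at this
    exact_mod_cast congrArg (Nat.cast : ℕ → ℚ) this
  have hd : (((n-1).descFactorial k : ℚ)) = (k ! : ℚ) * ((n-1).choose k : ℚ) := by
    exact_mod_cast congrArg (Nat.cast : ℕ → ℚ) (Nat.descFactorial_eq_factorial_mul_choose (n-1) k)
  rw [hch, hd]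
  have h0 : ((k+n)! : ℚ) ≠ 0 := by positivity
  field_simp
end

section
/- Let m ∈ ℤ≥0, b ≠ 0, c ≠ 0, λ ≠ 1, α a positive integer. Define the Frobenius-type Eulerian polynomials of order α by ((1-λ)/(e^{t(λ-1)}-λ))^α e^{xt} = ∑_{n≥0} A_n^{(α)}(x|λ) t^n/n!, and Poisson–Charlier polynomials Cₙ(x;a) = ∑_{k=0}^n C(n,k)(-1)^{n-k} a^{-k}(x)_k. For n ≥ 1, the polynomial Sₙ(x) := ((1-λ)/(e^{(λ-1)t}-λ))^α · x · e^{nct}(1+bt)^{mn} x^{n-1} satisfies Sₙ(x) = (-1)^{mn} ∑_{l=0}^{n-1} C_{mn}(l; -nc/b) (nc)^l C(n-1,l) A_{n-l}^{(α)}(x|λ). -/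
open PowerSeries Nat

noncomputable section

lemma ff_nat (k i : ℕ) : ff (k : ℚ) i = (k.descFactorial i : ℚ) := by
  rcases le_or_gt i k with h | h
  · rw [ff, Nat.descFactorial_eq_prod_range, Nat.cast_prod]
    refine Finset.prod_congr rfl fun t ht => ?_
    have ht' : t ≤ k := le_trans (le_of_lt (Finset.mem_range.1 ht)) h
    push_cast [Nat.cast_sub ht']
    ring
  · rw [Nat.descFactorial_eq_zero_iff_lt.2 h, Nat.cast_zero, ff]
    exact Finset.prod_eq_zero (Finset.mem_range.2 h) (by simp)

lemma act_eq (f : PowerSeries ℚ) (p : Polynomial ℚ) {N : ℕ} (h : p.natDegree < N) :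
    act f p = ∑ k ∈ Finset.range N,
      PowerSeries.coeff k f • (⇑Polynomial.derivative)^[k] p := by
  rw [act]
  refine Finset.sum_subset ?_ ?_
  · intro k hk; simp only [Finset.mem_range] at *; omega
  · intro k _ hk2
    rw [Polynomial.iterate_derivative_eq_zero
      (by simp only [Finset.mem_range] at hk2; omega), smul_zero]

lemma act_smul (f : PowerSeries ℚ) (c : ℚ) (p : Polynomial ℚ) :
    act f (c • p) = c • act f p := by
  rw [act_eq f (c • p) (lt_of_le_of_lt (Polynomial.natDegree_smul_le c p)
      (Nat.lt_succ_self _)), act, Finset.smul_sum]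
  refine Finset.sum_congr rfl fun k _ => ?_
  rw [Polynomial.iterate_derivative_smul, smul_comm]

lemma act_sum {ι : Type*} (f : PowerSeries ℚ) (s : Finset ι) (p : ι → Polynomial ℚ)
    (N : ℕ) (hN : 0 < N) (h : ∀ i ∈ s, (p i).natDegree < N) :
    act f (∑ i ∈ s, p i) = ∑ i ∈ s, act f (p i) := by
  have hsum : (∑ i ∈ s, p i).natDegree < N := by
    rcases N with _ | N
    · omega
    · exact Nat.lt_succ_of_le (Polynomial.natDegree_sum_le_of_forall_le s p
        (fun i hi => Nat.lt_succ_iff.1 (h i hi)))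
  rw [act_eq f _ hsum]
  have : ∀ k, (⇑Polynomial.derivative)^[k] (∑ i ∈ s, p i)
      = ∑ i ∈ s, (⇑Polynomial.derivative)^[k] (p i) :=
    fun k => Polynomial.iterate_derivative_sum k s p
  simp_rw [this, Finset.smul_sum]
  rw [Finset.sum_comm]
  exact Finset.sum_congr rfl fun i hi => (act_eq f (p i) (h i hi)).symm

lemma act_X_pow_s17 (f : PowerSeries ℚ) (j : ℕ) : act f (Polynomial.X ^ j) = polyOf f j := by
  rw [polyOf, PowerSeries.coeff_mul, Finset.Nat.sum_antidiagonal_eq_sum_range_succ_mk,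
    act, Polynomial.natDegree_X_pow, Finset.smul_sum]
  refine Finset.sum_congr rfl fun k hk => ?_
  have hk' : k ≤ j := Nat.lt_succ_iff.1 (Finset.mem_range.1 hk)
  rw [Polynomial.iterate_derivative_X_pow_eq_smul]
  simp only [PowerSeries.coeff_map, expPoly, PowerSeries.coeff_mk]
  rw [mul_smul_comm, smul_smul, ← Polynomial.smul_eq_C_mul, smul_smul, smul_smul]
  congr 1
  have hfac : (j.descFactorial k : ℚ) * (j - k)! = (j ! : ℚ) := by
    rw_mod_cast [Nat.descFactorial_eq_factorial_mul_choose]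
    rw [← Nat.choose_mul_factorial_mul_factorial hk']
    push_cast
    ring
  have h2 : ((j - k)! : ℚ) ≠ 0 := Nat.cast_ne_zero.2 (Nat.factorial_ne_zero _)
  field_simp
  rw [← hfac]
  ring


noncomputable section

lemma binom_term (b : ℚ) (M i : ℕ) :
    (PowerSeries.C b * PowerSeries.X) ^ i * (1 : PowerSeries ℚ) ^ (M - i) *
        ((M.choose i : ℕ) : PowerSeries ℚ)
      = PowerSeries.C (b ^ i * (M.choose i : ℚ)) * PowerSeries.X ^ i := by
  rw [one_pow, mul_one, mul_pow, ← map_pow, map_mul,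
    ← map_natCast (PowerSeries.C (R := ℚ)) (M.choose i)]
  ring

lemma coeff_binom (b : ℚ) (M j : ℕ) :
    PowerSeries.coeff j ((1 + PowerSeries.C b * PowerSeries.X) ^ M)
      = (M.choose j : ℚ) * b ^ j := by
  rw [add_comm (1 : PowerSeries ℚ), add_pow]
  simp_rw [binom_term, map_sum, PowerSeries.coeff_C_mul, PowerSeries.coeff_X_pow, mul_ite,
    mul_one, mul_zero]
  rw [Finset.sum_eq_single j]
  · rw [if_pos rfl]; ring
  · intro i _ hij; rw [if_neg (Ne.symm hij)]
  · intro hj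
    rw [if_pos rfl, Nat.choose_eq_zero_of_lt (by simpa using hj)]
    simp

lemma dF_mul_fac (k j : ℕ) (h : j ≤ k) :
    (k.descFactorial j : ℚ) * ((k - j)! : ℚ) = (k ! : ℚ) := by
  rw_mod_cast [Nat.descFactorial_eq_factorial_mul_choose]
  rw [← Nat.choose_mul_factorial_mul_factorial h]
  ring

lemma key (M k : ℕ) (b aa : ℚ) (hb : b ≠ 0) (ha : aa ≠ 0) :
    (PowerSeries.coeff k
        (PowerSeries.rescale aa expS * (1 + PowerSeries.C b * PowerSeries.X) ^ M)) * (k ! : ℚ)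
      = (-1 : ℚ) ^ M * PC M (k : ℚ) (-aa / b) * aa ^ k := by
  have hfac : ∀ j : ℕ, ((j)! : ℚ) ≠ 0 := fun j => Nat.cast_ne_zero.2 (Nat.factorial_ne_zero _)
  -- the common sum
  set T : ℕ → ℚ := fun j => (k.descFactorial j : ℚ) * aa ^ (k - j) * (M.choose j : ℚ) * b ^ j
    with hT
  have hL : (PowerSeries.coeff k
        (PowerSeries.rescale aa expS * (1 + PowerSeries.C b * PowerSeries.X) ^ M)) * (k ! : ℚ)
      = ∑ j ∈ Finset.range (k + 1), T j := by
    rw [PowerSeries.coeff_mul, Finset.Nat.sum_antidiagonal_eq_sum_range_succ_mk, Finset.sum_mul,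
      ← Finset.sum_range_reflect]
    refine Finset.sum_congr rfl fun j hj => ?_
    have hjk : j ≤ k := Nat.lt_succ_iff.1 (Finset.mem_range.1 hj)
    have h1 : k + 1 - 1 - j = k - j := by omega
    have h2 : k - (k - j) = j := by omega
    rw [h1, PowerSeries.coeff_rescale, coeff_binom, h2]
    simp only [hT]
    simp only [expS, PowerSeries.coeff_exp, eq_ratCast, Rat.cast_eq_id, id_eq]
    have : (1 : ℚ) / (k - j)! = ((k - j)! : ℚ)⁻¹ := one_div _
    field_simp
    rw [← dF_mul_fac k j hjk]
    ring
  have hR : (-1 : ℚ) ^ M * PC M (k : ℚ) (-aa / b) * aa ^ k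
      = ∑ i ∈ Finset.range (M + 1), T i := by
    rw [PC, Finset.mul_sum, Finset.sum_mul]
    refine Finset.sum_congr rfl fun i hi => ?_
    have hiM : i ≤ M := Nat.lt_succ_iff.1 (Finset.mem_range.1 hi)
    simp only [ff_nat, hT]
    rcases le_or_gt i k with hik | hik
    · have hsign : (-1 : ℚ) ^ M * (-1 : ℚ) ^ (M - i) = (-1) ^ i := by
        rw [← pow_add]
        have : M + (M - i) = 2 * (M - i) + i := by omega
        rw [this, pow_add, pow_mul]
        simp
      have hinv : (-aa / b)⁻¹ = -(b / aa) := by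
        rw [neg_div, inv_neg, inv_div]
      have hsplit : aa ^ k = aa ^ (k - i) * aa ^ i := by
        rw [← pow_add, Nat.sub_add_cancel hik]
      rw [hinv, hsplit]
      have : (-(b / aa)) ^ i = (-1) ^ i * (b / aa) ^ i := by rw [neg_pow]
      rw [this]
      have hii : ((-1 : ℚ)) ^ i * ((-1 : ℚ)) ^ i = 1 := by
        rw [← pow_add, ← two_mul, pow_mul]; simp
      have hba : (b / aa) ^ i * aa ^ i = b ^ i := by
        rw [div_pow, div_mul_cancel₀ _ (pow_ne_zero i ha)]
      calc (-1:ℚ) ^ M * ((M.choose i : ℚ) * (-1) ^ (M - i) * ((-1) ^ i * (b / aa) ^ i)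
            * (k.descFactorial i : ℚ)) * (aa ^ (k - i) * aa ^ i)
          = ((-1:ℚ) ^ M * (-1) ^ (M - i)) * ((-1) ^ i * ((b / aa) ^ i * aa ^ i))
            * ((M.choose i : ℚ) * (k.descFactorial i : ℚ) * aa ^ (k - i)) := by ring
        _ = (k.descFactorial i : ℚ) * aa ^ (k - i) * (M.choose i : ℚ) * b ^ i := by
            rw [hsign, hba]
            rw [show ((-1:ℚ)) ^ i * ((-1:ℚ) ^ i * b ^ i) = ((-1:ℚ) ^ i * (-1) ^ i) * b ^ i
              from by ring, hii]
            ring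
    · simp only [Nat.descFactorial_eq_zero_iff_lt.2 hik, Nat.cast_zero, mul_zero, zero_mul]
  rw [hL, hR]
  rcases le_total k M with h | h
  · refine Finset.sum_subset (by intro j hj; simp only [Finset.mem_range] at *; omega) ?_
    intro j _ hj2
    have : k < j := by simp only [Finset.mem_range] at hj2; omega
    simp only [hT, Nat.descFactorial_eq_zero_iff_lt.2 this, Nat.cast_zero, zero_mul]
  · refine (Finset.sum_subset (by intro j hj; simp only [Finset.mem_range] at *; omega) ?_).symm
    intro j _ hj2
    have : M < j := by simp only [Finset.mem_range] at hj2; omega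
    simp only [hT, Nat.choose_eq_zero_of_lt this, Nat.cast_zero, zero_mul, mul_zero]


end

theorem stmt17 (m : ℕ) (b c lam : ℚ) (hb : b ≠ 0) (hc : c ≠ 0) (hlam : lam ≠ 1)
    (α : ℕ) (hα : 0 < α) (n : ℕ) (hn : 1 ≤ n) :
    act (Aser lam α)
        (Polynomial.X * act
          (PowerSeries.rescale ((n : ℚ) * c) expS *
            (1 + PowerSeries.C b * PowerSeries.X) ^ (m * n))
          (Polynomial.X ^ (n - 1))) =
      ∑ l ∈ Finset.range n,
        ((-1 : ℚ) ^ (m * n) * PC (m * n) (l : ℚ) (-((n : ℚ) * c) / b) *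
          ((n : ℚ) * c) ^ l * ((n - 1).choose l)) • Apol lam α (n - l) := by
  have hn0 : (n : ℚ) * c ≠ 0 := mul_ne_zero (Nat.cast_ne_zero.2 (by omega)) hc
  have hn1 : n - 1 + 1 = n := Nat.succ_pred_eq_of_pos hn
  set g : PowerSeries ℚ := PowerSeries.rescale ((n : ℚ) * c) expS *
    (1 + PowerSeries.C b * PowerSeries.X) ^ (m * n) with hg
  have hinner : act g (Polynomial.X ^ (n - 1))
      = ∑ k ∈ Finset.range n,
          (PowerSeries.coeff k g * ((n - 1).descFactorial k : ℚ)) •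
            Polynomial.X ^ (n - 1 - k) := by
    rw [act, Polynomial.natDegree_X_pow, hn1]
    refine Finset.sum_congr rfl fun k hk => ?_
    rw [Polynomial.iterate_derivative_X_pow_eq_smul, smul_smul]
  rw [hinner, Finset.mul_sum]
  have hXmul : ∀ k ∈ Finset.range n,
      Polynomial.X * ((PowerSeries.coeff k g * ((n - 1).descFactorial k : ℚ)) •
          (Polynomial.X ^ (n - 1 - k) : Polynomial ℚ))
        = (PowerSeries.coeff k g * ((n - 1).descFactorial k : ℚ)) •
            (Polynomial.X ^ (n - k) : Polynomial ℚ) := by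
    intro k hk
    have hk' : n - 1 - k + 1 = n - k := by
      have := Finset.mem_range.1 hk; omega
    rw [mul_smul_comm]
    congr 1
    rw [← hk', pow_succ]
    ring
  rw [Finset.sum_congr rfl hXmul]
  rw [act_sum (Aser lam α) (Finset.range n) _ (n + 1) (by omega) (fun k _ => by
    calc (((PowerSeries.coeff k) g * ((n - 1).descFactorial k : ℚ)) •
            Polynomial.X ^ (n - k)).natDegree
        ≤ (Polynomial.X ^ (n - k) : Polynomial ℚ).natDegree :=
          Polynomial.natDegree_smul_le _ _
      _ = n - k := Polynomial.natDegree_X_pow _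
      _ < n + 1 := by omega)]
  simp_rw [act_smul, act_X_pow_s17]
  refine Finset.sum_congr rfl fun k hk => ?_
  rw [show polyOf (Aser lam α) (n - k) = Apol lam α (n - k) from rfl]
  congr 1
  rw [Nat.descFactorial_eq_factorial_mul_choose]
  push_cast
  rw [show (PowerSeries.coeff k) g * ((k ! : ℚ) * ((n - 1).choose k : ℚ))
      = ((PowerSeries.coeff k) g * (k ! : ℚ)) * ((n - 1).choose k : ℚ) from by ring,
    key (m * n) k b ((n : ℚ) * c) hb hn0]
end
end
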